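/- Fix y, y' ∈ F and z, z' ∈ E. Suppose x₀ ∈ X minimizes x ↦ K(x, y, z) over X, x' ∈ X minimizes x ↦ K(x, y', z) over X, and x'' ∈ X minimizes x ↦ K(x, y', z') over X. Then K(x'', y', z') − K(x₀, y, z) ≥ ⟨y' − y, Ax' − b⟩ + (μ/2)·⟨z' − z, z' + z − 2x''⟩. -/
import Mathlib


open MeasureTheory
open scoped RealInnerProductSpace

theorem stmt_5
    {E F : Type*}
    [NormedAddCommGroup E] [InnerProductSpace ℝ E] [FiniteDimensional ℝ E]
    [NormedAddCommGroup F] [InnerProductSpace ℝ F] [FiniteDimensional ℝ F]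
    (A : E →L[ℝ] F) (b : F) (X : Set E)
    (hXne : X.Nonempty) (hXcl : IsClosed X) (hXcv : Convex ℝ X)
    (f : E → ℝ) (f' : E → E) (Lf : ℝ) (hLf : 0 ≤ Lf)
    (hf : ∀ x, HasGradientAt f (f' x) x)
    (hlip : ∀ u v, ‖f' u - f' v‖ ≤ Lf * ‖u - v‖)
    (ρ μ : ℝ) (hρ : 0 ≤ ρ) (hμ : 0 < μ)
    (K : E → F → E → ℝ)
    (hK : ∀ x y z, K x y z =
      f x + ⟪A x - b, y⟫ + (ρ/2) * ‖A x - b‖^2 + (μ/2) * ‖x - z‖^2)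
    (y y' : F) (z z' : E) (x₀ x' x'' : E)
    (hx₀ : x₀ ∈ X ∧ ∀ w ∈ X, K x₀ y z ≤ K w y z)
    (hx' : x' ∈ X ∧ ∀ w ∈ X, K x' y' z ≤ K w y' z)
    (hx'' : x'' ∈ X ∧ ∀ w ∈ X, K x'' y' z' ≤ K w y' z') :
    K x'' y' z' - K x₀ y z
      ≥ ⟪y' - y, A x' - b⟫ + (μ/2) * ⟪z' - z, z' + z - (2:ℝ) • x''⟫ := by
  have h1 : K x₀ y z ≤ K x' y z := hx₀.2 x' hx'.1
  have h2 : K x' y' z ≤ K x'' y' z := hx'.2 x'' hx''.1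
  have e1 : K x' y' z - K x' y z = ⟪y' - y, A x' - b⟫ := by
    have h : (⟪y' - y, A x' - b⟫ : ℝ) = ⟪A x' - b, y'⟫ - ⟪A x' - b, y⟫ := by
      rw [real_inner_comm]; exact inner_sub_right _ _ _
    rw [hK, hK, h]; ring
  have e2 : K x'' y' z' - K x'' y' z
      = (μ/2) * ⟪z' - z, z' + z - (2:ℝ) • x''⟫ := by
    rw [hK, hK]
    have hn : ∀ v : E, ‖v‖^2 = ⟪v, v⟫ := fun v => (real_inner_self_eq_norm_sq v).symm
    rw [hn (x'' - z'), hn (x'' - z)]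
    simp only [inner_sub_left, inner_sub_right, inner_add_left, inner_add_right,
      inner_smul_right, real_inner_comm z' x'', real_inner_comm z x'',
      real_inner_comm z z']
    ring
  linarith
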